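/- The price of anarchy is lower bounded: Σ_n ω_n log(u_n(a^{NE})/u_n(a^{PB})) > (1 + Σ_n ω_n β_n)·log[(1 + Σ_n ω_n β_n)^2 / ((1 + Σ_n ω_n^2 β_n)(1 + Σ_n β_n))]. -/

import Mathlib

open Finset

/-- Lower bound on the price of anarchy in Type II games. -/
theorem typeII_poa_lower_bound (N : ℕ) (hN : 2 ≤ N)
    (β τ ω : Fin N → ℝ) (μ : ℝ)
    (hβ : ∀ n, 0 < β n) (hτ : ∀ n, 0 < τ n) (hω : ∀ n, 0 < ω n) (hμ : 0 < μ)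
    (hsum : ∑ n, ω n = 1)
    (u : (Fin N → ℝ) → Fin N → ℝ)
    (hu : ∀ a n, u a n = Real.rpow (a n) (β n) * (μ - ∑ m, τ m * a m))
    (aNE aPB : Fin N → ℝ)
    (hNE : ∀ n, aNE n = β n * μ / (τ n * (1 + ∑ m, β m)))
    (hPB : ∀ n, aPB n = ω n * β n * μ / (τ n * (1 + ∑ m, ω m * β m))) :
    (1 + ∑ n, ω n * β n) *
        Real.log ((1 + ∑ n, ω n * β n) ^ 2 /
          ((1 + ∑ n, ω n ^ 2 * β n) * (1 + ∑ n, β n)))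
      < ∑ n, ω n * Real.log (u aNE n / u aPB n) := by
  set B := ∑ n, β n with hBdef
  set S := ∑ n, ω n * β n with hSdef
  set T := ∑ n, ω n ^ 2 * β n with hTdef
  have hne : (Finset.univ : Finset (Fin N)).Nonempty := ⟨⟨0, by omega⟩, mem_univ _⟩
  have hBpos : 0 < B := Finset.sum_pos (fun n _ => hβ n) hne
  have hSpos : 0 < S := Finset.sum_pos (fun n _ => mul_pos (hω n) (hβ n)) hne
  have hTpos : 0 < T :=
    Finset.sum_pos (fun n _ => mul_pos (pow_pos (hω n) 2) (hβ n)) hne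
  have h1B : (0:ℝ) < 1 + B := by linarith
  have h1S : (0:ℝ) < 1 + S := by linarith
  have h1T : (0:ℝ) < 1 + T := by linarith
  have h1B' : (1:ℝ) + B ≠ 0 := h1B.ne'
  have h1S' : (1:ℝ) + S ≠ 0 := h1S.ne'
  -- each ω n < 1
  have hωlt : ∀ n, ω n < 1 := by
    intro n
    obtain ⟨m, hm⟩ : ∃ m : Fin N, m ≠ n := by
      by_cases h : n = ⟨0, by omega⟩
      · exact ⟨⟨1, by omega⟩, by simp [h, Fin.ext_iff]⟩
      · exact ⟨⟨0, by omega⟩, fun hc => h hc.symm⟩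
    have h2 := Finset.single_lt_sum hm (mem_univ n) (mem_univ m)
      (hω m) (fun k _ _ => (hω k).le)
    rw [hsum] at h2
    exact h2
  have hTS : T < S := by
    apply Finset.sum_lt_sum_of_nonempty hne
    intro n _
    have : ω n ^ 2 < ω n := by nlinarith [hω n, hωlt n]
    nlinarith [hβ n]
  -- Step A: Jensen: ∑ ω β log ω ≤ S * log (T/S)
  have stepA : ∑ n, ω n * β n * Real.log (ω n) ≤ S * Real.log (T / S) := by
    have hjen := ConcaveOn.le_map_sum (t := Finset.univ)
      (w := fun n => ω n * β n / S) (p := fun n => ω n)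
      strictConcaveOn_log_Ioi.concaveOn
      (fun n _ => le_of_lt (div_pos (mul_pos (hω n) (hβ n)) hSpos))
      (by rw [← Finset.sum_div, ← hSdef, div_self hSpos.ne'])
      (fun n _ => Set.mem_Ioi.2 (hω n))
    have hpt : ∑ n, (ω n * β n / S) • ω n = T / S := by
      have h1 : ∀ n ∈ (univ : Finset (Fin N)),
          (ω n * β n / S) • ω n = (ω n ^ 2 * β n) / S := by
        intro n _
        rw [smul_eq_mul]
        ring
      rw [Finset.sum_congr rfl h1, ← Finset.sum_div, ← hTdef]
    rw [hpt] at hjen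
    have h2 := mul_le_mul_of_nonneg_left hjen hSpos.le
    have h3 : S * ∑ n, (ω n * β n / S) • Real.log (ω n)
        = ∑ n, ω n * β n * Real.log (ω n) := by
      rw [Finset.mul_sum]
      apply Finset.sum_congr rfl
      intro n _
      rw [smul_eq_mul]
      field_simp
    rw [h3] at h2
    exact h2
  -- Step B: strict 2-point concavity
  have stepB : S * Real.log (T / S) < (1 + S) * (Real.log (1 + T) - Real.log (1 + S)) := by
    have hne1 : T / S ≠ 1 := by
      intro h
      rw [div_eq_one_iff_eq hSpos.ne'] at h
      linarith
    have hstrict := strictConcaveOn_log_Ioi.2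
      (Set.mem_Ioi.2 (div_pos hTpos hSpos))
      (Set.mem_Ioi.2 one_pos) hne1
      (div_pos hSpos h1S) (div_pos one_pos h1S)
      (by rw [← add_div, show (S:ℝ)+1 = 1+S by ring, div_self h1S'])
    simp only [smul_eq_mul, Real.log_one, mul_zero, mul_one, add_zero] at hstrict
    have harg : S / (1 + S) * (T / S) + 1 / (1 + S) = (1 + T) / (1 + S) := by
      field_simp
      ring
    rw [harg, Real.log_div h1T.ne' h1S'] at hstrict
    have h4 := mul_lt_mul_of_pos_left hstrict h1S
    have h5 : (1 + S) * (S / (1 + S) * Real.log (T / S)) = S * Real.log (T / S) := by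
      field_simp
    rw [h5] at h4
    exact h4
  have key : ∑ n, ω n * β n * Real.log (ω n)
      < (1 + S) * (Real.log (1 + T) - Real.log (1 + S)) := lt_of_le_of_lt stepA stepB
  -- residuals
  have hresNE : μ - ∑ m, τ m * aNE m = μ / (1 + B) := by
    have h1 : ∑ m, τ m * aNE m = B * (μ / (1 + B)) := by
      have h2 : ∀ m ∈ (univ : Finset (Fin N)),
          τ m * aNE m = β m * (μ / (1 + B)) := by
        intro m _
        rw [hNE m]
        have hτ' := (hτ m).ne'
        field_simp
      rw [Finset.sum_congr rfl h2, ← Finset.sum_mul, ← hBdef]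
    rw [h1]
    field_simp
    ring
  have hresPB : μ - ∑ m, τ m * aPB m = μ / (1 + S) := by
    have h1 : ∑ m, τ m * aPB m = S * (μ / (1 + S)) := by
      have h2 : ∀ m ∈ (univ : Finset (Fin N)),
          τ m * aPB m = ω m * β m * (μ / (1 + S)) := by
        intro m _
        rw [hPB m]
        have hτ' := (hτ m).ne'
        field_simp
      rw [Finset.sum_congr rfl h2, ← Finset.sum_mul, ← hSdef]
    rw [h1]
    field_simp
    ring
  -- per-term log formula
  have hterm : ∀ n, Real.log (u aNE n / u aPB n)
      = β n * (Real.log (1 + S) - Real.log (ω n) - Real.log (1 + B))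
        + (Real.log (1 + S) - Real.log (1 + B)) := by
    intro n
    have haNE : 0 < aNE n := by
      rw [hNE n]; exact div_pos (mul_pos (hβ n) hμ) (mul_pos (hτ n) h1B)
    have haPB : 0 < aPB n := by
      rw [hPB n]; exact div_pos (mul_pos (mul_pos (hω n) (hβ n)) hμ) (mul_pos (hτ n) h1S)
    have huNE : u aNE n = aNE n ^ (β n) * (μ / (1 + B)) := by
      rw [hu, hresNE]; rfl
    have huPB : u aPB n = aPB n ^ (β n) * (μ / (1 + S)) := by
      rw [hu, hresPB]; rfl
    have h1 : (0:ℝ) < aNE n ^ (β n) := Real.rpow_pos_of_pos haNE _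
    have h2 : (0:ℝ) < aPB n ^ (β n) := Real.rpow_pos_of_pos haPB _
    have hc : (0:ℝ) < μ / (1 + B) := div_pos hμ h1B
    have hd : (0:ℝ) < μ / (1 + S) := div_pos hμ h1S
    rw [huNE, huPB, Real.log_div (mul_pos h1 hc).ne' (mul_pos h2 hd).ne',
      Real.log_mul h1.ne' hc.ne', Real.log_mul h2.ne' hd.ne',
      Real.log_rpow haNE, Real.log_rpow haPB,
      Real.log_div hμ.ne' h1B', Real.log_div hμ.ne' h1S']
    have hratio : Real.log (aNE n) - Real.log (aPB n)
        = Real.log (1 + S) - Real.log (ω n) - Real.log (1 + B) := by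
      rw [← Real.log_div haNE.ne' haPB.ne']
      have hx : aNE n / aPB n = (1 + S) / (ω n * (1 + B)) := by
        rw [hNE n, hPB n]
        have hτ' := (hτ n).ne'
        have hω' := (hω n).ne'
        have hβ' := (hβ n).ne'
        field_simp
      rw [hx, Real.log_div h1S' (mul_pos (hω n) h1B).ne',
        Real.log_mul (hω n).ne' h1B']
      ring
    have h6 : β n * Real.log (aNE n) - β n * Real.log (aPB n)
        = β n * (Real.log (1 + S) - Real.log (ω n) - Real.log (1 + B)) := by
      rw [← mul_sub, hratio]
    linarith [h6]
  -- rewrite the sum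
  have hsum2 : ∑ n, ω n * Real.log (u aNE n / u aPB n)
      = S * Real.log (1 + S) - (∑ n, ω n * β n * Real.log (ω n))
        - S * Real.log (1 + B) + (Real.log (1 + S) - Real.log (1 + B)) := by
    have h7 : ∀ n ∈ (univ : Finset (Fin N)),
        ω n * Real.log (u aNE n / u aPB n)
        = ω n * β n * Real.log (1 + S) - ω n * β n * Real.log (ω n)
            - ω n * β n * Real.log (1 + B)
            + ω n * (Real.log (1 + S) - Real.log (1 + B)) := by
      intro n _
      rw [hterm n]
      ring
    rw [Finset.sum_congr rfl h7, Finset.sum_add_distrib, Finset.sum_sub_distrib,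
      Finset.sum_sub_distrib, ← Finset.sum_mul, ← Finset.sum_mul, ← Finset.sum_mul,
      hsum, ← hSdef]
    ring
  -- rewrite LHS
  have hLHS : Real.log ((1 + S) ^ 2 / ((1 + T) * (1 + B)))
      = 2 * Real.log (1 + S) - Real.log (1 + T) - Real.log (1 + B) := by
    rw [Real.log_div (pow_ne_zero 2 h1S') (mul_pos h1T h1B).ne',
      Real.log_mul h1T.ne' h1B', Real.log_pow]
    push_cast
    ring
  rw [hsum2, hLHS]
  nlinarith [key]
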